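/- arXiv:1507.00166 — 3 statements merged into one kernel-verified Lean document; each statement's English description precedes it below -/
import Mathlib

section
/- If u : ℝ² → ℝ is twice continuously differentiable and satisfies f(u(x,y)+y) + g(u(x,y)-y) = x for all (x,y), where f, g : ℝ → ℝ are twice continuously differentiable, and u_x(x,y) ≠ 0, then u satisfies the Dubreil-Jacotin equation (u_y² − 1)·u_xx − 2·u_x·u_y·u_xy + u_x²·u_yy = 0 at (x,y). -/
noncomputable def ux (u : ℝ → ℝ → ℝ) (x y : ℝ) : ℝ := deriv (fun t => u t y) x
noncomputable def uy (u : ℝ → ℝ → ℝ) (x y : ℝ) : ℝ := deriv (fun t => u x t) y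
noncomputable def uxx (u : ℝ → ℝ → ℝ) (x y : ℝ) : ℝ := deriv (fun t => ux u t y) x
noncomputable def uxy (u : ℝ → ℝ → ℝ) (x y : ℝ) : ℝ := deriv (fun t => ux u x t) y
noncomputable def uyy (u : ℝ → ℝ → ℝ) (x y : ℝ) : ℝ := deriv (fun t => uy u x t) y

theorem dubreil_jacotin_of_general_integral
    (u : ℝ → ℝ → ℝ) (f g : ℝ → ℝ)
    (hu : ContDiff ℝ 2 (fun p : ℝ × ℝ => u p.1 p.2))
    (hf : ContDiff ℝ 2 f) (hg : ContDiff ℝ 2 g)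
    (heq : ∀ x y : ℝ, f (u x y + y) + g (u x y - y) = x)
    (x y : ℝ) (hux : ux u x y ≠ 0) :
    ((uy u x y) ^ 2 - 1) * uxx u x y
      - 2 * ux u x y * uy u x y * uxy u x y
      + (ux u x y) ^ 2 * uyy u x y = 0 := by
  set U : ℝ × ℝ → ℝ := fun p => u p.1 p.2 with hUdef
  have hUd : Differentiable ℝ U := hu.differentiable (by norm_num)
  set Ux : ℝ × ℝ → ℝ := fun p => fderiv ℝ U p (1, 0) with hUxdef
  set Uy : ℝ × ℝ → ℝ := fun p => fderiv ℝ U p (0, 1) with hUydef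
  have hUxC : ContDiff ℝ 1 Ux := (hu.fderiv_right (by norm_num)).clm_apply contDiff_const
  have hUyC : ContDiff ℝ 1 Uy := (hu.fderiv_right (by norm_num)).clm_apply contDiff_const
  -- partial derivatives along lines
  have hline1 : ∀ a b : ℝ, HasDerivAt (fun t => u t b) (Ux (a, b)) a := fun a b =>
    by have h := ((hUd (a, b)).hasFDerivAt).comp_hasDerivAt a ((hasDerivAt_id a).prodMk (hasDerivAt_const a b)); exact h
  have hline2 : ∀ a b : ℝ, HasDerivAt (fun t => u a t) (Uy (a, b)) b := fun a b =>
    by have h := ((hUd (a, b)).hasFDerivAt).comp_hasDerivAt b ((hasDerivAt_const b a).prodMk (hasDerivAt_id b)); exact h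
  have hux_eq : ∀ a b : ℝ, ux u a b = Ux (a, b) := fun a b => (hline1 a b).deriv
  have huy_eq : ∀ a b : ℝ, uy u a b = Uy (a, b) := fun a b => (hline2 a b).deriv
  -- second partial derivatives
  have hUxd : Differentiable ℝ Ux := hUxC.differentiable one_ne_zero
  have hUyd : Differentiable ℝ Uy := hUyC.differentiable one_ne_zero
  have hdUx_x : HasDerivAt (fun t => Ux (t, y)) (uxx u x y) x := by
    have h : uxx u x y = deriv (fun t => Ux (t, y)) x := by
      unfold uxx; congr 1; funext t; exact hux_eq t y
    rw [h]
    exact ((hUxd.comp (differentiable_id.prodMk (differentiable_const y))) x).hasDerivAt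
  have hdUx_y : HasDerivAt (fun t => Ux (x, t)) (uxy u x y) y := by
    have h : uxy u x y = deriv (fun t => Ux (x, t)) y := by
      unfold uxy; congr 1; funext t; exact hux_eq x t
    rw [h]
    exact ((hUxd.comp ((differentiable_const x).prodMk differentiable_id)) y).hasDerivAt
  have hdUy_y : HasDerivAt (fun t => Uy (x, t)) (uyy u x y) y := by
    have h : uyy u x y = deriv (fun t => Uy (x, t)) y := by
      unfold uyy; congr 1; funext t; exact huy_eq x t
    rw [h]
    exact ((hUyd.comp ((differentiable_const x).prodMk differentiable_id)) y).hasDerivAt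
  -- derivative facts for f, g
  have hfd : Differentiable ℝ f := hf.differentiable (by norm_num)
  have hgd : Differentiable ℝ g := hg.differentiable (by norm_num)
  have hf'd : Differentiable ℝ (deriv f) := by
    have h2 : ContDiff ℝ ((1:ℕ)+1) f := by exact_mod_cast hf
    exact (contDiff_succ_iff_deriv.mp h2).2.2.differentiable (by norm_num)
  have hg'd : Differentiable ℝ (deriv g) := by
    have h2 : ContDiff ℝ ((1:ℕ)+1) g := by exact_mod_cast hg
    exact (contDiff_succ_iff_deriv.mp h2).2.2.differentiable (by norm_num)
  -- first-order relations
  have E1 : ∀ a b : ℝ, (deriv f (u a b + b) + deriv g (u a b - b)) * Ux (a, b) = 1 := by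
    intro a b
    have hA : HasDerivAt (fun t => u t b + b) (Ux (a, b)) a := (hline1 a b).add_const b
    have hB : HasDerivAt (fun t => u t b - b) (Ux (a, b)) a := (hline1 a b).sub_const b
    have hfA : HasDerivAt (fun t => f (u t b + b)) (deriv f (u a b + b) * Ux (a, b)) a :=
      (hfd (u a b + b)).hasDerivAt.comp a hA
    have hgB : HasDerivAt (fun t => g (u t b - b)) (deriv g (u a b - b) * Ux (a, b)) a :=
      (hgd (u a b - b)).hasDerivAt.comp a hB
    have h1 := hfA.add hgB
    have h2 : HasDerivAt (fun t => f (u t b + b) + g (u t b - b)) 1 a := by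
      have he : (fun t => f (u t b + b) + g (u t b - b)) = fun t => t :=
        funext fun t => heq t b
      rw [he]; exact hasDerivAt_id' (x := a)
    have := h1.unique h2
    linarith [this]
  have E2 : ∀ a b : ℝ,
      deriv f (u a b + b) * (Uy (a, b) + 1) + deriv g (u a b - b) * (Uy (a, b) - 1) = 0 := by
    intro a b
    have hA : HasDerivAt (fun t => u a t + t) (Uy (a, b) + 1) b :=
      (hline2 a b).add (hasDerivAt_id b)
    have hB : HasDerivAt (fun t => u a t - t) (Uy (a, b) - 1) b :=
      (hline2 a b).sub (hasDerivAt_id b)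
    have hfA := HasDerivAt.comp (h₂ := f) (h := fun t => u a t + t) b
      (hfd (u a b + b)).hasDerivAt hA
    have hgB := HasDerivAt.comp (h₂ := g) (h := fun t => u a t - t) b
      (hgd (u a b - b)).hasDerivAt hB
    have h1 := hfA.add hgB
    have h2 : HasDerivAt (fun t => f (u a t + t) + g (u a t - t)) 0 b := by
      have he : (fun t => f (u a t + t) + g (u a t - t)) = fun _ => a := by
        funext t
        have := heq a t
        simpa using this
      rw [he]; exact hasDerivAt_const b a
    exact h1.unique h2
  -- shorthand
  set w := Ux (x, y) with hw
  set v := Uy (x, y) with hv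
  set A := deriv f (u x y + y) with hA
  set B := deriv g (u x y - y) with hB
  set P := deriv (deriv f) (u x y + y) with hP
  set Q := deriv (deriv g) (u x y - y) with hQ
  -- second-order relation R3: d/dx of E1
  have hAx : HasDerivAt (fun t => u t y + y) w x := (hline1 x y).add_const y
  have hBx : HasDerivAt (fun t => u t y - y) w x := (hline1 x y).sub_const y
  have hAy : HasDerivAt (fun t => u x t + t) (v + 1) y := (hline2 x y).add (hasDerivAt_id y)
  have hBy : HasDerivAt (fun t => u x t - t) (v - 1) y := (hline2 x y).sub (hasDerivAt_id y)
  have R3 : (P * w + Q * w) * w + (A + B) * uxx u x y = 0 := by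
    have hfA : HasDerivAt (fun t => deriv f (u t y + y)) (P * w) x :=
      by have h := (hf'd (u x y + y)).hasDerivAt.comp x hAx; exact h
    have hgB : HasDerivAt (fun t => deriv g (u t y - y)) (Q * w) x :=
      by have h := (hg'd (u x y - y)).hasDerivAt.comp x hBx; exact h
    have h1 := (hfA.add hgB).mul hdUx_x
    have h2 : HasDerivAt
        (fun t => (deriv f (u t y + y) + deriv g (u t y - y)) * Ux (t, y)) 0 x := by
      have he : (fun t => (deriv f (u t y + y) + deriv g (u t y - y)) * Ux (t, y))
          = fun _ => (1 : ℝ) := funext fun t => E1 t y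
      rw [he]; exact hasDerivAt_const x 1
    have := h1.unique h2
    simp only [Pi.add_apply] at this
    linarith [this]
  -- R4: d/dy of E1
  have R4 : (P * (v + 1) + Q * (v - 1)) * w + (A + B) * uxy u x y = 0 := by
    have hfA := HasDerivAt.comp (h₂ := deriv f) (h := fun t => u x t + t) y
      (hf'd (u x y + y)).hasDerivAt hAy
    have hgB := HasDerivAt.comp (h₂ := deriv g) (h := fun t => u x t - t) y
      (hg'd (u x y - y)).hasDerivAt hBy
    have h1 := (hfA.add hgB).mul hdUx_y
    have h2 : HasDerivAt
        (fun t => (deriv f (u x t + t) + deriv g (u x t - t)) * Ux (x, t)) 0 y := by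
      have he : (fun t => (deriv f (u x t + t) + deriv g (u x t - t)) * Ux (x, t))
          = fun _ => (1 : ℝ) := funext fun t => E1 x t
      rw [he]; exact hasDerivAt_const y 1
    have := h1.unique h2
    simp only [Function.comp, Pi.add_apply] at this
    linarith [this]
  -- R5: d/dy of E2
  have R5 : (P * (v + 1) * (v + 1) + A * uyy u x y)
      + (Q * (v - 1) * (v - 1) + B * uyy u x y) = 0 := by
    have hfA := HasDerivAt.comp (h₂ := deriv f) (h := fun t => u x t + t) y
      (hf'd (u x y + y)).hasDerivAt hAy
    have hgB := HasDerivAt.comp (h₂ := deriv g) (h := fun t => u x t - t) y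
      (hg'd (u x y - y)).hasDerivAt hBy
    have hv1 : HasDerivAt (fun t => Uy (x, t) + 1) (uyy u x y) y := hdUy_y.add_const 1
    have hv2 : HasDerivAt (fun t => Uy (x, t) - 1) (uyy u x y) y := hdUy_y.sub_const 1
    have h1 := (hfA.mul hv1).add (hgB.mul hv2)
    have h2 : HasDerivAt
        (fun t => deriv f (u x t + t) * (Uy (x, t) + 1)
          + deriv g (u x t - t) * (Uy (x, t) - 1)) 0 y := by
      have he : (fun t => deriv f (u x t + t) * (Uy (x, t) + 1)
          + deriv g (u x t - t) * (Uy (x, t) - 1)) = fun _ => (0 : ℝ) :=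
        funext fun t => E2 x t
      rw [he]; exact hasDerivAt_const y 0
    have := h1.unique h2
    simp only [Function.comp] at this
    linarith [this]
  have R1 : (A + B) * w = 1 := E1 x y
  rw [hux_eq x y, huy_eq x y]
  linear_combination (-((v ^ 2 - 1) * uxx u x y - 2 * w * v * uxy u x y + w ^ 2 * uyy u x y)) * R1
    + w * (v ^ 2 - 1) * R3 - 2 * w ^ 2 * v * R4 + w ^ 3 * R5
end

section
/- For any u : ℝ² → ℝ which is C² and satisfies (1/2)e^{u(x,y)+y} + u(x,y) − y − (1/2)e^{u(x,y)−y} = x on an open set where u_x ≠ 0, the Dubreil-Jacotin equation (u_y² − 1)u_xx − 2u_x u_y u_xy + u_x² u_yy = 0 holds on that set. -/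
open Real Filter

section Aux
variable {u : ℝ → ℝ → ℝ}

private lemma diffU (hu : ContDiff ℝ 2 (fun p : ℝ × ℝ => u p.1 p.2)) :
    Differentiable ℝ (fun p : ℝ × ℝ => u p.1 p.2) :=
  hu.differentiable (by norm_num)

private lemma hderiv_x (hu : ContDiff ℝ 2 (fun p : ℝ × ℝ => u p.1 p.2)) (x y : ℝ) :
    HasDerivAt (fun t => u t y) (fderiv ℝ (fun p : ℝ × ℝ => u p.1 p.2) (x, y) (1, 0)) x := by
  have h1 : HasDerivAt (fun t : ℝ => ((t, y) : ℝ × ℝ)) ((1 : ℝ), (0 : ℝ)) x :=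
    HasDerivAt.prodMk (hasDerivAt_id x) (hasDerivAt_const x y)
  exact ((diffU hu (x, y)).hasFDerivAt).comp_hasDerivAt x h1

private lemma hderiv_y (hu : ContDiff ℝ 2 (fun p : ℝ × ℝ => u p.1 p.2)) (x y : ℝ) :
    HasDerivAt (fun t => u x t) (fderiv ℝ (fun p : ℝ × ℝ => u p.1 p.2) (x, y) (0, 1)) y := by
  have h1 : HasDerivAt (fun t : ℝ => ((x, t) : ℝ × ℝ)) ((0 : ℝ), (1 : ℝ)) y :=
    HasDerivAt.prodMk (hasDerivAt_const y x) (hasDerivAt_id y)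
  exact ((diffU hu (x, y)).hasFDerivAt).comp_hasDerivAt y h1

private lemma ux_eq (hu : ContDiff ℝ 2 (fun p : ℝ × ℝ => u p.1 p.2)) (x y : ℝ) :
    ux u x y = fderiv ℝ (fun p : ℝ × ℝ => u p.1 p.2) (x, y) (1, 0) :=
  (hderiv_x hu x y).deriv

private lemma uy_eq (hu : ContDiff ℝ 2 (fun p : ℝ × ℝ => u p.1 p.2)) (x y : ℝ) :
    uy u x y = fderiv ℝ (fun p : ℝ × ℝ => u p.1 p.2) (x, y) (0, 1) :=
  (hderiv_y hu x y).deriv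

private lemma ux_hasDerivAt (hu : ContDiff ℝ 2 (fun p : ℝ × ℝ => u p.1 p.2)) (x y : ℝ) :
    HasDerivAt (fun t => u t y) (ux u x y) x := by
  rw [ux_eq hu]; exact hderiv_x hu x y

private lemma uy_hasDerivAt (hu : ContDiff ℝ 2 (fun p : ℝ × ℝ => u p.1 p.2)) (x y : ℝ) :
    HasDerivAt (fun t => u x t) (uy u x y) y := by
  rw [uy_eq hu]; exact hderiv_y hu x y

private lemma fderiv_cd (hu : ContDiff ℝ 2 (fun p : ℝ × ℝ => u p.1 p.2)) :
    ContDiff ℝ 1 (fderiv ℝ (fun p : ℝ × ℝ => u p.1 p.2)) :=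
  hu.fderiv_right (by norm_num)

private lemma diffV (hu : ContDiff ℝ 2 (fun p : ℝ × ℝ => u p.1 p.2)) (v : ℝ × ℝ) :
    Differentiable ℝ (fun p : ℝ × ℝ => fderiv ℝ (fun p : ℝ × ℝ => u p.1 p.2) p v) := by
  have h : (fun p : ℝ × ℝ => fderiv ℝ (fun p : ℝ × ℝ => u p.1 p.2) p v)
      = (ContinuousLinearMap.apply ℝ ℝ v) ∘ (fderiv ℝ (fun p : ℝ × ℝ => u p.1 p.2)) := rfl
  rw [h]
  exact ((ContinuousLinearMap.apply ℝ ℝ v).contDiff.comp (fderiv_cd hu)).differentiable one_ne_zero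

private lemma uxx_hasDerivAt (hu : ContDiff ℝ 2 (fun p : ℝ × ℝ => u p.1 p.2)) (x y : ℝ) :
    HasDerivAt (fun t => ux u t y) (uxx u x y) x := by
  have heq : (fun t => ux u t y)
      = fun t => fderiv ℝ (fun p : ℝ × ℝ => u p.1 p.2) (t, y) ((1 : ℝ), (0 : ℝ)) :=
    funext fun t => ux_eq hu t y
  have hd : DifferentiableAt ℝ (fun t => ux u t y) x := by
    rw [heq]
    exact (diffV hu (1, 0) (x, y)).comp x (DifferentiableAt.prodMk (𝕜 := ℝ) (x := x) differentiableAt_id (differentiableAt_const y))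
  exact hd.hasDerivAt

private lemma uxy_hasDerivAt (hu : ContDiff ℝ 2 (fun p : ℝ × ℝ => u p.1 p.2)) (x y : ℝ) :
    HasDerivAt (fun t => ux u x t) (uxy u x y) y := by
  have heq : (fun t => ux u x t)
      = fun t => fderiv ℝ (fun p : ℝ × ℝ => u p.1 p.2) (x, t) ((1 : ℝ), (0 : ℝ)) :=
    funext fun t => ux_eq hu x t
  have hd : DifferentiableAt ℝ (fun t => ux u x t) y := by
    rw [heq]
    exact (diffV hu (1, 0) (x, y)).comp y (DifferentiableAt.prodMk (differentiableAt_const x) differentiableAt_id)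
  exact hd.hasDerivAt

private lemma uyy_hasDerivAt (hu : ContDiff ℝ 2 (fun p : ℝ × ℝ => u p.1 p.2)) (x y : ℝ) :
    HasDerivAt (fun t => uy u x t) (uyy u x y) y := by
  have heq : (fun t => uy u x t)
      = fun t => fderiv ℝ (fun p : ℝ × ℝ => u p.1 p.2) (x, t) ((0 : ℝ), (1 : ℝ)) :=
    funext fun t => uy_eq hu x t
  have hd : DifferentiableAt ℝ (fun t => uy u x t) y := by
    rw [heq]
    exact (diffV hu (0, 1) (x, y)).comp y (DifferentiableAt.prodMk (differentiableAt_const x) differentiableAt_id)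
  exact hd.hasDerivAt

end Aux

theorem example1_satisfies_equation
    (u : ℝ → ℝ → ℝ) (s : Set (ℝ × ℝ)) (hs : IsOpen s)
    (hu : ContDiff ℝ 2 (fun p : ℝ × ℝ => u p.1 p.2))
    (heq : ∀ p ∈ s, (1 / 2) * Real.exp (u p.1 p.2 + p.2) + (u p.1 p.2 - p.2)
        - (1 / 2) * Real.exp (u p.1 p.2 - p.2) = p.1)
    (hux : ∀ p ∈ s, ux u p.1 p.2 ≠ 0) :
    ∀ p ∈ s, ((uy u p.1 p.2) ^ 2 - 1) * uxx u p.1 p.2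
      - 2 * ux u p.1 p.2 * uy u p.1 p.2 * uxy u p.1 p.2
      + (ux u p.1 p.2) ^ 2 * uyy u p.1 p.2 = 0 := by
  -- eventual membership lemmas
  have hevx : ∀ {x y : ℝ}, (x, y) ∈ s → ∀ᶠ t in nhds x, ((t, y) : ℝ × ℝ) ∈ s := by
    intro x y hq
    exact (hs.preimage (continuous_id.prodMk continuous_const)).eventually_mem hq
  have hevy : ∀ {x y : ℝ}, (x, y) ∈ s → ∀ᶠ t in nhds y, ((x, t) : ℝ × ℝ) ∈ s := by
    intro x y hq
    exact (hs.preimage (continuous_const.prodMk continuous_id)).eventually_mem hq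
  -- first derivative relation in x : ux * Gv = 1 on s
  have hR1 : ∀ x y : ℝ, (x, y) ∈ s →
      ux u x y * ((1/2) * Real.exp (u x y + y) + 1 - (1/2) * Real.exp (u x y - y)) = 1 := by
    intro x y hq
    have hx := ux_hasDerivAt hu x y
    have hD : HasDerivAt
        (fun t => (1/2) * Real.exp (u t y + y) + (u t y - y) - (1/2) * Real.exp (u t y - y))
        ((1/2) * (Real.exp (u x y + y) * ux u x y) + ux u x y
          - (1/2) * (Real.exp (u x y - y) * ux u x y)) x := by
      exact (((((hx.add_const y).exp).const_mul (1/2)).add (hx.sub_const y)).sub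
        (((hx.sub_const y).exp).const_mul (1/2)))
    have hev2 : (fun t => (1/2) * Real.exp (u t y + y) + (u t y - y)
        - (1/2) * Real.exp (u t y - y)) =ᶠ[nhds x] fun t => t :=
      (hevx hq).mono fun t ht => heq (t, y) ht
    have h1 : HasDerivAt (fun t => (1/2) * Real.exp (u t y + y) + (u t y - y)
        - (1/2) * Real.exp (u t y - y)) 1 x :=
      (hasDerivAt_id x).congr_of_eventuallyEq hev2
    have := hD.unique h1
    linear_combination this
  -- first derivative relation in y
  have hR2 : ∀ x y : ℝ, (x, y) ∈ s →
      (1/2) * Real.exp (u x y + y) * (uy u x y + 1) + (uy u x y - 1)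
        - (1/2) * Real.exp (u x y - y) * (uy u x y - 1) = 0 := by
    intro x y hq
    have hy := uy_hasDerivAt hu x y
    have hD : HasDerivAt
        (fun t => (1/2) * Real.exp (u x t + t) + (u x t - t) - (1/2) * Real.exp (u x t - t))
        ((1/2) * (Real.exp (u x y + y) * (uy u x y + 1)) + (uy u x y - 1)
          - (1/2) * (Real.exp (u x y - y) * (uy u x y - 1))) y := by
      exact ((((hy.add (hasDerivAt_id y)).exp).const_mul (1/2)).add
        (hy.sub (hasDerivAt_id y))).sub
        (((hy.sub (hasDerivAt_id y)).exp).const_mul (1/2))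
    have hev2 : (fun t => (1/2) * Real.exp (u x t + t) + (u x t - t)
        - (1/2) * Real.exp (u x t - t)) =ᶠ[nhds y] fun _ => x :=
      (hevy hq).mono fun t ht => heq (x, t) ht
    have h1 : HasDerivAt (fun t => (1/2) * Real.exp (u x t + t) + (u x t - t)
        - (1/2) * Real.exp (u x t - t)) 0 y :=
      (hasDerivAt_const y x).congr_of_eventuallyEq hev2
    have := hD.unique h1
    linear_combination this
  rintro ⟨a, b⟩ hp
  simp only at *
  have hx := ux_hasDerivAt hu a b
  have hy := uy_hasDerivAt hu a b
  have hxx := uxx_hasDerivAt hu a b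
  have hxy := uxy_hasDerivAt hu a b
  have hyy := uyy_hasDerivAt hu a b
  -- second derivative relation: differentiate hR1 in x
  have hR3 : uxx u a b * ((1/2) * Real.exp (u a b + b) + 1 - (1/2) * Real.exp (u a b - b))
      + ux u a b * ((1/2) * (Real.exp (u a b + b) * ux u a b)
        - (1/2) * (Real.exp (u a b - b) * ux u a b)) = 0 := by
    have hD := hxx.mul (((((hx.add_const b).exp).const_mul (1/2)).add_const 1).sub
        (((hx.sub_const b).exp).const_mul (1/2)))
    have hev2 : (fun t => ux u t b * ((1/2) * Real.exp (u t b + b) + 1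
        - (1/2) * Real.exp (u t b - b))) =ᶠ[nhds a] fun _ => (1 : ℝ) :=
      (hevx hp).mono fun t ht => hR1 t b ht
    have h1 := (hasDerivAt_const a (1 : ℝ)).congr_of_eventuallyEq hev2
    have := hD.unique h1
    simp only [Pi.add_apply, Pi.sub_apply, id_eq] at this
    linear_combination this
  -- differentiate hR1 in y
  have hR4 : uxy u a b * ((1/2) * Real.exp (u a b + b) + 1 - (1/2) * Real.exp (u a b - b))
      + ux u a b * ((1/2) * (Real.exp (u a b + b) * (uy u a b + 1))
        - (1/2) * (Real.exp (u a b - b) * (uy u a b - 1))) = 0 := by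
    have hD := hxy.mul (((((hy.add (hasDerivAt_id b)).exp).const_mul (1/2)).add_const 1).sub
        (((hy.sub (hasDerivAt_id b)).exp).const_mul (1/2)))
    have hev2 : (fun t => ux u a t * ((1/2) * Real.exp (u a t + t) + 1
        - (1/2) * Real.exp (u a t - t))) =ᶠ[nhds b] fun _ => (1 : ℝ) :=
      (hevy hp).mono fun t ht => hR1 a t ht
    have h1 := (hasDerivAt_const b (1 : ℝ)).congr_of_eventuallyEq hev2
    have := hD.unique h1
    simp only [Pi.add_apply, Pi.sub_apply, id_eq] at this
    linear_combination this
  -- differentiate hR2 in y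
  have hR5 : ((1/2) * (Real.exp (u a b + b) * (uy u a b + 1))) * (uy u a b + 1)
      + ((1/2) * Real.exp (u a b + b)) * uyy u a b + uyy u a b
      - (((1/2) * (Real.exp (u a b - b) * (uy u a b - 1))) * (uy u a b - 1)
        + ((1/2) * Real.exp (u a b - b)) * uyy u a b) = 0 := by
    have hD := (((((hy.add (hasDerivAt_id b)).exp).const_mul (1/2)).mul (hyy.add_const 1)).add
        (hyy.sub_const 1)).sub
        ((((hy.sub (hasDerivAt_id b)).exp).const_mul (1/2)).mul (hyy.sub_const 1))
    have hev2 : (fun t => (1/2) * Real.exp (u a t + t) * (uy u a t + 1) + (uy u a t - 1)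
        - (1/2) * Real.exp (u a t - t) * (uy u a t - 1)) =ᶠ[nhds b] fun _ => (0 : ℝ) :=
      (hevy hp).mono fun t ht => hR2 a t ht
    have h1 := (hasDerivAt_const b (0 : ℝ)).congr_of_eventuallyEq hev2
    have := hD.unique h1
    simp only [Pi.add_apply, Pi.sub_apply, id_eq] at this
    linear_combination this
  -- assemble
  have h1 := hR1 a b hp
  have hGv : (1/2) * Real.exp (u a b + b) + 1 - (1/2) * Real.exp (u a b - b) ≠ 0 := by
    intro h
    rw [h, mul_zero] at h1
    norm_num at h1
  have key : (((uy u a b) ^ 2 - 1) * uxx u a b - 2 * ux u a b * uy u a b * uxy u a b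
      + (ux u a b) ^ 2 * uyy u a b)
      * ((1/2) * Real.exp (u a b + b) + 1 - (1/2) * Real.exp (u a b - b)) = 0 := by
    linear_combination ((uy u a b) ^ 2 - 1) * hR3 - 2 * ux u a b * uy u a b * hR4
      + (ux u a b) ^ 2 * hR5
  rcases mul_eq_zero.mp key with h | h
  · exact h
  · exact absurd h hGv
end

section
/- The point (x,y) with y < 0 lying on the curve e^{1+x} = 2/(1−e^{2y}) also satisfies the envelope condition for the second family f₂(x,y,c) = (1/2)e^{c+2y} + c − (1/2)e^c − x = 0: there exists c ∈ ℝ with f₂(x,y,c) = 0 and ∂f₂/∂c (x,y,c) = 0. -/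
theorem envelope_second_family (x y : ℝ) (hy : y < 0)
    (henv : Real.exp (1 + x) = 2 / (1 - Real.exp (2 * y))) :
    ∃ c : ℝ,
      (1 / 2) * Real.exp (c + 2 * y) + c - (1 / 2) * Real.exp c - x = 0 ∧
      (1 / 2) * Real.exp (c + 2 * y) + 1 - (1 / 2) * Real.exp c = 0 := by
  have ht : Real.exp (2 * y) < 1 := by
    rw [← Real.exp_zero]
    exact Real.exp_lt_exp.mpr (by linarith)
  have hpos : 0 < 1 - Real.exp (2 * y) := by linarith
  have key : Real.exp (1 + x) * (1 - Real.exp (2 * y)) = 2 := by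
    rw [henv]; field_simp
  refine ⟨1 + x, ?_, ?_⟩ <;>
  · have h2 : Real.exp (1 + x + 2 * y) = Real.exp (1 + x) * Real.exp (2 * y) := by
      rw [← Real.exp_add]
    nlinarith [key, h2]
end
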